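/- Let p and q be probability distributions on a finite set with p_i ≥ τ and q_i ≥ τ for all i, for some 0 < τ ≤ 1/3. Then ∑_i (log p_i − log q_i)² ≤ (4 (log τ)² / τ) · ∑_i p_i log(p_i / q_i). -/

import Mathlib

open Real

private lemma aux_deriv1 (x : ℝ) :
    HasDerivAt (fun x : ℝ => Real.exp x * (x - 1) + 1 - x ^ 2 / 2)
      (x * (Real.exp x - 1)) x := by
  have h := (((Real.hasDerivAt_exp x).mul ((hasDerivAt_id x).sub_const 1)).add_const 1).sub
    ((hasDerivAt_pow 2 x).div_const 2)
  refine h.congr_deriv ?_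
  simp only [id]
  push_cast
  ring

private lemma aux1 {x : ℝ} (hx : 0 ≤ x) : x ^ 2 / 2 ≤ Real.exp x * (x - 1) + 1 := by
  have hmono : Monotone (fun x : ℝ => Real.exp x * (x - 1) + 1 - x ^ 2 / 2) :=
    monotone_of_deriv_nonneg (fun x => (aux_deriv1 x).differentiableAt)
      (fun x => by
        rw [(aux_deriv1 x).deriv]
        rcases le_or_gt 0 x with h | h
        · exact mul_nonneg h (by simpa using Real.one_le_exp h)
        · have h1 : Real.exp x ≤ 1 := Real.exp_le_one_iff.2 h.le
          nlinarith)
  have := hmono hx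
  simp only [Real.exp_zero] at this
  linarith

private lemma aux_deriv2 (x : ℝ) :
    HasDerivAt (fun x : ℝ => Real.exp x * (x - 1 - x ^ 2 / 2) + 1)
      (-(Real.exp x * x ^ 2 / 2)) x := by
  have h1 : HasDerivAt (fun x : ℝ => x - 1 - x ^ 2 / 2) (1 - 2 * x / 2) x := by
    have := ((hasDerivAt_id x).sub_const 1).sub ((hasDerivAt_pow 2 x).div_const 2)
    refine this.congr_deriv ?_
    push_cast; ring
  have h := ((Real.hasDerivAt_exp x).mul h1).add_const 1
  refine h.congr_deriv ?_
  ring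

private lemma aux2 {x : ℝ} (hx : x ≤ 0) :
    0 ≤ Real.exp x * (x - 1 - x ^ 2 / 2) + 1 := by
  have hanti : Antitone (fun x : ℝ => Real.exp x * (x - 1 - x ^ 2 / 2) + 1) :=
    antitone_of_deriv_nonpos (fun x => (aux_deriv2 x).differentiableAt)
      (fun x => by
        rw [(aux_deriv2 x).deriv]
        have : 0 ≤ Real.exp x * x ^ 2 / 2 := by positivity
        linarith)
  have := hanti hx
  simp only [Real.exp_zero] at this
  linarith

private lemma key {a b : ℝ} (ha : 0 < a) (hb : 0 < b) :
    min a b * (Real.log a - Real.log b) ^ 2 / 2 ≤ a * Real.log (a / b) - a + b := by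
  set x := Real.log a - Real.log b with hxdef
  have hlog : Real.log (a / b) = x := Real.log_div ha.ne' hb.ne'
  rw [hlog]
  rcases le_total b a with hba | hab
  · -- x ≥ 0, min = b
    have hx0 : 0 ≤ x := sub_nonneg.2 (Real.log_le_log hb hba)
    have h1 := aux1 hx0
    have hexp : Real.exp x = a / b := by
      rw [hxdef, Real.exp_sub, Real.exp_log ha, Real.exp_log hb]
    rw [hexp] at h1
    have h2 : b * (x ^ 2 / 2) ≤ b * (a / b * (x - 1) + 1) :=
      mul_le_mul_of_nonneg_left h1 hb.le
    have hmin : min a b = b := min_eq_right hba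
    rw [hmin]
    have : b * (a / b * (x - 1) + 1) = a * x - a + b := by
      field_simp
    rw [this] at h2
    linarith
  · -- x ≤ 0, min = a
    have hx0 : x ≤ 0 := sub_nonpos.2 (Real.log_le_log ha hab)
    have h1 := aux2 hx0
    have hexp : Real.exp x = a / b := by
      rw [hxdef, Real.exp_sub, Real.exp_log ha, Real.exp_log hb]
    rw [hexp] at h1
    have h2 : b * 0 ≤ b * (a / b * (x - 1 - x ^ 2 / 2) + 1) :=
      mul_le_mul_of_nonneg_left h1 hb.le
    have hmin : min a b = a := min_eq_left hab
    rw [hmin]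
    have : b * (a / b * (x - 1 - x ^ 2 / 2) + 1) = a * x - a - a * x ^ 2 / 2 + b := by
      field_simp
    rw [this] at h2
    linarith

theorem log_sq_sum_le_kl_of_both_tau_bounded {d : ℕ} (p q : Fin d → ℝ) (τ : ℝ)
    (hτ0 : 0 < τ) (hτ : τ ≤ 1/3)
    (hp1 : ∑ i, p i = 1) (hq1 : ∑ i, q i = 1)
    (hp : ∀ i, τ ≤ p i) (hq : ∀ i, τ ≤ q i) :
    ∑ i, (Real.log (p i) - Real.log (q i))^2 ≤
      4 * (Real.log τ)^2 / τ * ∑ i, p i * Real.log (p i / q i) := by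
  have hL : 1 ≤ (Real.log τ) ^ 2 := by
    have h3 : (1 : ℝ) ≤ Real.log 3 := by
      rw [Real.le_log_iff_exp_le (by norm_num)]
      calc Real.exp 1 ≤ 2.7182818286 := Real.exp_one_lt_d9.le
        _ ≤ 3 := by norm_num
    have hlogτ : Real.log τ ≤ -Real.log 3 := by
      have : Real.log τ ≤ Real.log (1 / 3) := Real.log_le_log hτ0 hτ
      rwa [Real.log_div one_ne_zero (by norm_num), Real.log_one, zero_sub] at this
    have h1 : Real.log τ ≤ -1 := by linarith
    nlinarith
  -- per-term inequality
  have hterm : ∀ i, (Real.log (p i) - Real.log (q i)) ^ 2 ≤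
      4 * (Real.log τ) ^ 2 / τ * (p i * Real.log (p i / q i) - p i + q i) := by
    intro i
    have hpi : 0 < p i := lt_of_lt_of_le hτ0 (hp i)
    have hqi : 0 < q i := lt_of_lt_of_le hτ0 (hq i)
    have hk := key hpi hqi
    have hminτ : τ ≤ min (p i) (q i) := le_min (hp i) (hq i)
    set s := (Real.log (p i) - Real.log (q i)) ^ 2 with hs
    have hs0 : 0 ≤ s := sq_nonneg _
    have h1 : τ * s / 2 ≤ p i * Real.log (p i / q i) - p i + q i := by
      calc τ * s / 2 ≤ min (p i) (q i) * s / 2 := by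
            apply div_le_div_of_nonneg_right _ (by norm_num)
            exact mul_le_mul_of_nonneg_right hminτ hs0
        _ ≤ _ := hk
    have hR0 : 0 ≤ p i * Real.log (p i / q i) - p i + q i := by
      have : 0 ≤ min (p i) (q i) * s / 2 := by positivity
      linarith
    have hc : 2 / τ ≤ 4 * (Real.log τ) ^ 2 / τ := by
      apply div_le_div_of_nonneg_right _ hτ0.le
      nlinarith
    calc s = (τ * s / 2) * (2 / τ) := by field_simp
      _ ≤ (p i * Real.log (p i / q i) - p i + q i) * (2 / τ) := by
          apply mul_le_mul_of_nonneg_right h1 (by positivity)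
      _ ≤ (p i * Real.log (p i / q i) - p i + q i) * (4 * (Real.log τ) ^ 2 / τ) := by
          apply mul_le_mul_of_nonneg_left hc hR0
      _ = 4 * (Real.log τ) ^ 2 / τ * (p i * Real.log (p i / q i) - p i + q i) := by ring
  calc ∑ i, (Real.log (p i) - Real.log (q i)) ^ 2
      ≤ ∑ i, 4 * (Real.log τ) ^ 2 / τ * (p i * Real.log (p i / q i) - p i + q i) :=
        Finset.sum_le_sum (fun i _ => hterm i)
    _ = 4 * (Real.log τ) ^ 2 / τ *
        (∑ i, p i * Real.log (p i / q i) - ∑ i, p i + ∑ i, q i) := by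
        rw [← Finset.mul_sum]
        congr 1
        rw [Finset.sum_add_distrib, Finset.sum_sub_distrib]
    _ = 4 * (Real.log τ) ^ 2 / τ * ∑ i, p i * Real.log (p i / q i) := by
        rw [hp1, hq1]; ring
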